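/- Let p ∈ (1,∞), S(ξ) = (1+|ξ|)^(p-2) ξ and F(ξ) = (1+|ξ|)^((p-2)/2) ξ on ℝ^(d×D). Then there exists c = c(p) > 0 such that for all ξ, η: (S(ξ) − S(η)) : (ξ − η) ≥ c |F(ξ) − F(η)|². -/

import Mathlib

set_option maxHeartbeats 1000000

section SCFAux

open Real

lemma SCF_helper1 {a b σ : ℝ} (hb : 1 ≤ b) (hba : b ≤ a) (hσ : 1 ≤ σ) :
    (a ^ σ - b ^ σ) * a ≤ σ * a ^ σ * (a - b) := by
  have ha0 : (0:ℝ) < a := by linarith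
  have hb0 : (0:ℝ) < b := by linarith
  have h1 : (-1 : ℝ) ≤ (b - a) / a := by
    rw [le_div_iff₀ ha0]; linarith
  have h := one_add_mul_self_le_rpow_one_add h1 hσ
  have h2 : (1 + (b - a) / a) = b / a := by field_simp; ring
  rw [h2, Real.div_rpow hb0.le ha0.le] at h
  have hap : (0:ℝ) < a ^ σ := Real.rpow_pos_of_pos ha0 σ
  have h3 := mul_le_mul_of_nonneg_right ((le_div_iff₀ hap).mp h) ha0.le
  have h4 : σ * ((b - a) / a) * a = σ * (b - a) := by field_simp
  nlinarith [h3]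

lemma SCF_helper2 {a b σ : ℝ} (hb : 1 ≤ b) (hba : b ≤ a) (hσ1 : σ ≤ 1) :
    (a ^ σ - b ^ σ) * a ≤ a ^ σ * (a - b) := by
  have ha0 : (0:ℝ) < a := by linarith
  have hb0 : (0:ℝ) < b := by linarith
  have hq : b / a ≤ 1 := by rw [div_le_one ha0]; exact hba
  have hq0 : (0:ℝ) < b / a := div_pos hb0 ha0
  have h := Real.rpow_le_rpow_of_exponent_ge hq0 hq hσ1
  rw [Real.rpow_one, Real.div_rpow hb0.le ha0.le] at h
  have hap : (0:ℝ) < a ^ σ := Real.rpow_pos_of_pos ha0 σ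
  have h4 : b * a ^ σ ≤ b ^ σ * a := (div_le_div_iff₀ ha0 hap).mp h
  nlinarith [h4]

lemma SCF_helper3 {a b σ : ℝ} (hb : 1 ≤ b) (hba : b ≤ a) (hσ0 : 0 ≤ σ) (hσ1 : σ ≤ 1) :
    a ^ σ * b ≤ b ^ σ * (b + σ * (a - b)) := by
  have ha0 : (0:ℝ) < a := by linarith
  have hb0 : (0:ℝ) < b := by linarith
  have h1 : (-1 : ℝ) ≤ (a - b) / b := by
    rw [le_div_iff₀ hb0]; linarith
  have h := rpow_one_add_le_one_add_mul_self h1 hσ0 hσ1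
  have h2 : (1 + (a - b) / b) = a / b := by field_simp; ring
  rw [h2, Real.div_rpow ha0.le hb0.le] at h
  have hbp : (0:ℝ) < b ^ σ := Real.rpow_pos_of_pos hb0 σ
  have h4 : a ^ σ ≤ b ^ σ * (1 + σ * ((a - b) / b)) := by
    rw [div_le_iff₀ hbp] at h
    nlinarith [h]
  have h5 := mul_le_mul_of_nonneg_right h4 hb0.le
  have h6 : b ^ σ * (1 + σ * ((a - b) / b)) * b = b ^ σ * (b + σ * (a - b)) := by
    field_simp
  rw [h6] at h5
  exact h5

/-- Ordered key scalar inequality. -/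
lemma SCF_key' (p : ℝ) (hp : 1 < p) (x y : ℝ) (hy : 0 ≤ y) (hxy : y ≤ x) :
    0 ≤ ((1+x)^(p-2) * x - (1+y)^(p-2) * y) * (x - y) ∧
    ((1+x)^((p-2)/2) * x - (1+y)^((p-2)/2) * y)^2
      ≤ (1 + (1 + ((p-2)/2)^2 + 1/(p-1))) * (((1+x)^(p-2) * x - (1+y)^(p-2) * y) * (x - y)) := by
  have hp1 : (0:ℝ) < p - 1 := by linarith
  have hx : (0:ℝ) ≤ x := le_trans hy hxy
  set a := 1 + x with ha_def
  set b := 1 + y with hb_def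
  have ha0 : (0:ℝ) < a := by rw [ha_def]; linarith
  have hb0 : (0:ℝ) < b := by rw [hb_def]; linarith
  have hb1 : (1:ℝ) ≤ b := by rw [hb_def]; linarith
  have hba : b ≤ a := by rw [ha_def, hb_def]; linarith
  set u := a ^ ((p-2)/2) with hu_def
  set v := b ^ ((p-2)/2) with hv_def
  have hu0 : (0:ℝ) < u := Real.rpow_pos_of_pos ha0 _
  have hv0 : (0:ℝ) < v := Real.rpow_pos_of_pos hb0 _
  have hU : a ^ (p-2) = u * u := by
    rw [hu_def, ← Real.rpow_add ha0]; ring_nf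
  have hV : b ^ (p-2) = v * v := by
    rw [hv_def, ← Real.rpow_add hb0]; ring_nf
  rw [hU, hV]
  set M := 1 + ((p-2)/2)^2 + 1/(p-1) with hM_def
  have hΔ : (0:ℝ) ≤ x - y := by linarith
  have hxa : x ≤ a := by rw [ha_def]; linarith
  have hyb : y ≤ b := by rw [hb_def]; linarith
  have hinvp : (0:ℝ) < 1/(p-1) := by positivity
  have hM_ge : 1/(p-1) ≤ M := by rw [hM_def]; nlinarith [sq_nonneg ((p-2)/2)]
  have hM_ge1 : (1:ℝ) ≤ M := by rw [hM_def]; nlinarith [sq_nonneg ((p-2)/2)]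
  have hM_ges : ((p-2)/2)^2 ≤ M := by rw [hM_def]; nlinarith
  have hab : a - b = x - y := by rw [ha_def, hb_def]; ring
  have key : 0 ≤ (u*u*x - v*v*y) * (x-y) ∧ (u-v)^2 * (x*y) ≤ M * ((u*u*x - v*v*y) * (x-y)) := by
    rcases le_or_gt 2 p with hp2 | hp2
    -- case p ≥ 2
    · have hs0 : (0:ℝ) ≤ (p-2)/2 := by linarith
      have huv : v ≤ u := Real.rpow_le_rpow hb0.le hba hs0
      have hQ : u*u*(x-y)^2 ≤ (u*u*x - v*v*y) * (x-y) := by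
        have h := mul_nonneg (mul_nonneg (mul_nonneg (sub_nonneg.2 huv)
          (by positivity : (0:ℝ) ≤ u + v)) hy) hΔ
        have hid : (u*u*x - v*v*y) * (x-y)
            = u*u*(x-y)^2 + (u-v)*(u+v)*y*(x-y) := by ring
        rw [hid]
        exact le_add_of_nonneg_right h
      have hQ0 : 0 ≤ (u*u*x - v*v*y) * (x-y) := le_trans (by positivity) hQ
      obtain ⟨K, hK0, hKM, hsub⟩ : ∃ K : ℝ, 0 ≤ K ∧ K^2 ≤ M ∧ (u - v)*a ≤ K*u*(x-y) := by
        rcases le_total ((p-2)/2) 1 with hs1 | hs1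
        · refine ⟨1, zero_le_one, ?_, ?_⟩
          · rw [one_pow]; exact hM_ge1
          · have h := SCF_helper2 hb1 hba hs1
            rw [← hu_def, ← hv_def, hab] at h
            linarith
        · refine ⟨(p-2)/2, by linarith, ?_, ?_⟩
          · exact hM_ges
          · have h := SCF_helper1 hb1 hba hs1
            rw [← hu_def, ← hv_def, hab] at h
            linarith
      refine ⟨hQ0, ?_⟩
      have hxya : x*y ≤ a*a := mul_le_mul hxa (le_trans hyb (by linarith)) hy ha0.le
      have e1 : ((u-v)*a)^2 ≤ (K*u*(x-y))^2 :=
        pow_le_pow_left₀ (mul_nonneg (sub_nonneg.2 huv) ha0.le) hsub 2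
      calc (u-v)^2*(x*y) ≤ (u-v)^2*(a*a) :=
            mul_le_mul_of_nonneg_left hxya (sq_nonneg _)
        _ = ((u-v)*a)^2 := by ring
        _ ≤ (K*u*(x-y))^2 := e1
        _ = K^2*(u*u*(x-y)^2) := by ring
        _ ≤ K^2*((u*u*x - v*v*y) * (x-y)) :=
            mul_le_mul_of_nonneg_left hQ (sq_nonneg K)
        _ ≤ M*((u*u*x - v*v*y) * (x-y)) :=
            mul_le_mul_of_nonneg_right hKM hQ0
    -- case p < 2
    · have hs1 : (0:ℝ) ≤ p/2 := by linarith
      have hvbua : v*b ≤ u*a := by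
        have h := Real.rpow_le_rpow hb0.le hba (by linarith : (0:ℝ) ≤ (p-2)/2 + 1)
        rw [Real.rpow_add_one ha0.ne', Real.rpow_add_one hb0.ne'] at h
        rw [hu_def, hv_def]; exact h
      have hvvb : v*v*b ≤ u*u*a := by
        have h := Real.rpow_le_rpow hb0.le hba (by linarith : (0:ℝ) ≤ (p-2) + 1)
        rw [Real.rpow_add_one ha0.ne', Real.rpow_add_one hb0.ne', hU, hV] at h
        exact h
      have hσ0 : (0:ℝ) ≤ 2 - p := by linarith
      have hσ1 : (2:ℝ) - p ≤ 1 := by linarith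
      have hF3 : a^(2-p) * b ≤ b^(2-p) * (b + (2-p)*(x-y)) := by
        have h := SCF_helper3 hb1 hba hσ0 hσ1
        rw [hab] at h; exact h
      have hBp : (0:ℝ) < b^(2-p) := Real.rpow_pos_of_pos hb0 _
      have hAp : (0:ℝ) < a^(2-p) := Real.rpow_pos_of_pos ha0 _
      have hAy : a^(2-p)*y ≤ b^(2-p)*(y + (2-p)*(x-y)) := by
        have h3 : (a^(2-p)*y)*b ≤ (b^(2-p)*(y + (2-p)*(x-y)))*b := by
          have h1 := mul_le_mul_of_nonneg_right hF3 hy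
          have h2 := mul_nonneg (mul_nonneg (mul_nonneg hσ0 hBp.le) hΔ) (sub_nonneg.2 hyb)
          linarith only [h1, h2]
        exact le_of_mul_le_mul_right h3 hb0
      have hA : a^(2-p) * (u*u) = 1 := by
        rw [← hU, ← Real.rpow_add ha0]; norm_num
      have hB : b^(2-p) * (v*v) = 1 := by
        rw [← hV, ← Real.rpow_add hb0]; norm_num
      have hgoal : v*v*y ≤ u*u*(y + (2-p)*(x-y)) := by
        have h5 := mul_le_mul_of_nonneg_right hAy
          (mul_nonneg (mul_pos hu0 hu0).le (mul_pos hv0 hv0).le)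
        calc v*v*y = (a^(2-p)*(u*u))*(v*v*y) := by rw [hA]; ring
          _ = a^(2-p)*y*((u*u)*(v*v)) := by ring
          _ ≤ b^(2-p)*(y + (2-p)*(x-y))*((u*u)*(v*v)) := h5
          _ = (b^(2-p)*(v*v))*(u*u*(y + (2-p)*(x-y))) := by ring
          _ = u*u*(y + (2-p)*(x-y)) := by rw [hB, one_mul]
      have hQlb : (p-1)*(u*u)*(x-y) ≤ u*u*x - v*v*y := by linarith only [hgoal]
      have hQlb2 : (p-1)*(u*u*(x-y)^2) ≤ (u*u*x - v*v*y) * (x-y) := by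
        linarith only [mul_le_mul_of_nonneg_right hQlb hΔ]
      have hQ0 : 0 ≤ (u*u*x - v*v*y) * (x-y) :=
        le_trans (mul_nonneg hp1.le (by positivity)) hQlb2
      refine ⟨hQ0, ?_⟩
      have huv : u ≤ v := by
        have hc : b^((2-p)/2) ≤ a^((2-p)/2) :=
          Real.rpow_le_rpow hb0.le hba (by linarith)
        have hA2 : a^((2-p)/2) * u = 1 := by
          rw [hu_def, ← Real.rpow_add ha0, show (2-p)/2 + (p-2)/2 = 0 by ring,
            Real.rpow_zero]
        have hB2 : b^((2-p)/2) * v = 1 := by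
          rw [hv_def, ← Real.rpow_add hb0, show (2-p)/2 + (p-2)/2 = 0 by ring,
            Real.rpow_zero]
        have h1 : a^((2-p)/2)*(u*v) = v := by rw [← mul_assoc, hA2, one_mul]
        have h2 : b^((2-p)/2)*(u*v) = u := by rw [mul_comm u v, ← mul_assoc, hB2, one_mul]
        have h3 := mul_le_mul_of_nonneg_right hc (mul_pos hu0 hv0).le
        linarith only [h1, h2, h3]
      have hsub : (v - u)*a ≤ v*(x-y) := by rw [← hab]; linarith only [hvbua]
      have e1 : ((v-u)*a)^2 ≤ (v*(x-y))^2 :=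
        pow_le_pow_left₀ (mul_nonneg (sub_nonneg.2 huv) ha0.le) hsub 2
      have e2 : v*v*(x*y) ≤ u*u*(a*a) := by
        have h7 : v*v*(x*y) ≤ v*v*(a*b) :=
          mul_le_mul_of_nonneg_left (mul_le_mul hxa hyb hy ha0.le) (by positivity)
        have h8 := mul_le_mul_of_nonneg_right hvvb ha0.le
        calc v*v*(x*y) ≤ v*v*(a*b) := h7
          _ = (v*v*b)*a := by ring
          _ ≤ (u*u*a)*a := h8
          _ = u*u*(a*a) := by ring
      have e3 : ((v-u)^2*(x*y))*(a*a) ≤ (u*u*(x-y)^2)*(a*a) := by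
        calc ((v-u)^2*(x*y))*(a*a) = ((v-u)*a)^2*(x*y) := by ring
          _ ≤ (v*(x-y))^2*(x*y) := mul_le_mul_of_nonneg_right e1 (mul_nonneg hx hy)
          _ = (v*v*(x*y))*(x-y)^2 := by ring
          _ ≤ (u*u*(a*a))*(x-y)^2 := mul_le_mul_of_nonneg_right e2 (sq_nonneg _)
          _ = (u*u*(x-y)^2)*(a*a) := by ring
      have e4 : (v-u)^2*(x*y) ≤ u*u*(x-y)^2 :=
        le_of_mul_le_mul_right e3 (by positivity)
      have e5 : u*u*(x-y)^2 ≤ 1/(p-1)*((u*u*x - v*v*y) * (x-y)) := by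
        rw [one_div, inv_mul_eq_div, le_div_iff₀ hp1, mul_comm]
        exact hQlb2
      have e6 : 1/(p-1)*((u*u*x - v*v*y) * (x-y)) ≤ M*((u*u*x - v*v*y) * (x-y)) :=
        mul_le_mul_of_nonneg_right hM_ge hQ0
      calc (u-v)^2*(x*y) = (v-u)^2*(x*y) := by ring
        _ ≤ u*u*(x-y)^2 := e4
        _ ≤ 1/(p-1)*((u*u*x - v*v*y) * (x-y)) := e5
        _ ≤ M*((u*u*x - v*v*y) * (x-y)) := e6
  obtain ⟨hQ0, hC2⟩ := key
  refine ⟨hQ0, ?_⟩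
  have hid : (u*x - v*y)^2
      = (u*u*x - v*v*y)*(x-y) + (u-v)^2*(x*y) := by ring
  rw [hid]
  calc (u*u*x - v*v*y)*(x-y) + (u-v)^2*(x*y)
      ≤ (u*u*x - v*v*y)*(x-y) + M*((u*u*x - v*v*y)*(x-y)) := by
        exact add_le_add_right hC2 _
    _ = (1 + M)*((u*u*x - v*v*y)*(x-y)) := by ring

/-- Symmetrized scalar key inequality with constant. -/
lemma SCF_key (p : ℝ) (hp : 1 < p) :
    ∃ c : ℝ, 0 < c ∧ c ≤ 1 ∧ ∀ x y : ℝ, 0 ≤ x → 0 ≤ y →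
      c * ((1+x)^((p-2)/2) * x - (1+y)^((p-2)/2) * y)^2
        ≤ ((1+x)^(p-2) * x - (1+y)^(p-2) * y) * (x - y) := by
  have hp1 : (0:ℝ) < p - 1 := by linarith
  set M := 1 + ((p-2)/2)^2 + 1/(p-1) with hM_def
  have hM0 : (0:ℝ) < M := by
    have : (0:ℝ) < 1/(p-1) := by positivity
    rw [hM_def]; nlinarith [sq_nonneg ((p-2)/2)]
  refine ⟨1/(1+M), by positivity, ?_, ?_⟩
  · rw [div_le_one (by linarith)]; linarith
  · intro x y hx hy
    rcases le_total y x with h | h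
    · obtain ⟨h0, h2⟩ := SCF_key' p hp x y hy h
      rw [div_mul_eq_mul_div, div_le_iff₀ (by linarith : (0:ℝ) < 1+M), one_mul]
      calc ((1+x)^((p-2)/2) * x - (1+y)^((p-2)/2) * y)^2
          ≤ (1 + M) * (((1+x)^(p-2) * x - (1+y)^(p-2) * y) * (x - y)) := h2
        _ = ((1+x)^(p-2) * x - (1+y)^(p-2) * y) * (x - y) * (1 + M) := by ring
    · obtain ⟨h0, h2⟩ := SCF_key' p hp y x hx h
      rw [div_mul_eq_mul_div, div_le_iff₀ (by linarith : (0:ℝ) < 1+M), one_mul]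
      calc ((1+x)^((p-2)/2) * x - (1+y)^((p-2)/2) * y)^2
          = ((1+y)^((p-2)/2) * y - (1+x)^((p-2)/2) * x)^2 := by ring
        _ ≤ (1 + M) * (((1+y)^(p-2) * y - (1+x)^(p-2) * x) * (y - x)) := h2
        _ = ((1+x)^(p-2) * x - (1+y)^(p-2) * y) * (x - y) * (1 + M) := by ring

end SCFAux

open scoped RealInnerProductSpace

/-- the monotonicity quantity of `S` controls `|F(ξ) − F(η)|²`. -/
theorem S_controls_F (d D : ℕ) (p : ℝ) (hp : 1 < p)
    (S F : EuclideanSpace ℝ (Fin d × Fin D) → EuclideanSpace ℝ (Fin d × Fin D))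
    (hS : ∀ ξ, S ξ = ((1 + ‖ξ‖) ^ (p - 2) : ℝ) • ξ)
    (hF : ∀ ξ, F ξ = ((1 + ‖ξ‖) ^ ((p - 2) / 2) : ℝ) • ξ) :
    ∃ c : ℝ, 0 < c ∧ ∀ ξ η : EuclideanSpace ℝ (Fin d × Fin D),
      c * ‖F ξ - F η‖ ^ 2 ≤ ⟪S ξ - S η, ξ - η⟫ := by
  obtain ⟨c, hc0, hc1, hkey⟩ := SCF_key p hp
  refine ⟨c, hc0, fun ξ η => ?_⟩
  rw [hS ξ, hS η, hF ξ, hF η]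
  set x := ‖ξ‖ with hx_def
  set y := ‖η‖ with hy_def
  have hx : (0:ℝ) ≤ x := norm_nonneg _
  have hy : (0:ℝ) ≤ y := norm_nonneg _
  have hax : (0:ℝ) < 1 + x := by linarith
  have hay : (0:ℝ) < 1 + y := by linarith
  set u := (1+x)^((p-2)/2) with hu_def
  set v := (1+y)^((p-2)/2) with hv_def
  have hu0 : (0:ℝ) < u := Real.rpow_pos_of_pos hax _
  have hv0 : (0:ℝ) < v := Real.rpow_pos_of_pos hay _
  have hU : (1+x)^(p-2) = u * u := by
    rw [hu_def, ← Real.rpow_add hax, show (p-2)/2 + (p-2)/2 = p-2 by ring]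
  have hV : (1+y)^(p-2) = v * v := by
    rw [hv_def, ← Real.rpow_add hay, show (p-2)/2 + (p-2)/2 = p-2 by ring]
  have ht : ⟪ξ, η⟫ ≤ x * y := real_inner_le_norm ξ η
  have expand1 : ⟪((1+x)^(p-2) : ℝ) • ξ - ((1+y)^(p-2) : ℝ) • η, ξ - η⟫
      = (1+x)^(p-2) * (x*x) + (1+y)^(p-2) * (y*y)
        - ((1+x)^(p-2) + (1+y)^(p-2)) * ⟪ξ, η⟫ := by
    rw [inner_sub_left, inner_sub_right, inner_sub_right, real_inner_smul_left,
      real_inner_smul_left, real_inner_smul_left, real_inner_smul_left,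
      real_inner_self_eq_norm_mul_norm, real_inner_self_eq_norm_mul_norm,
      real_inner_comm η ξ]
    rw [← hx_def, ← hy_def]
    ring
  have expand2 : ‖(u : ℝ) • ξ - (v : ℝ) • η‖^2 = u^2*(x*x) + v^2*(y*y) - 2*(u*v)*⟪ξ, η⟫ := by
    rw [norm_sub_sq_real, norm_smul, norm_smul, real_inner_smul_left, real_inner_smul_right]
    rw [Real.norm_eq_abs, Real.norm_eq_abs, abs_of_pos hu0, abs_of_pos hv0]
    rw [← hx_def, ← hy_def]
    ring
  rw [expand1, expand2, hU, hV]
  have hkxy := hkey x y hx hy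
  rw [hU, hV] at hkxy
  have hcoef : 0 ≤ u*u + v*v - 2*c*(u*v) := by
    nlinarith [sq_nonneg (u - v), mul_pos hu0 hv0]
  have h2 := mul_nonneg (sub_nonneg.2 ht) hcoef
  linarith only [hkxy, h2]
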